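/- The operations x ▷ y = 2x + 2y + 2 and x ▷̄ y = x + 2 on ZMod 3 form a biquandle: (1) x ▷ x = x ▷̄ x for all x; (2) for each y the maps x ↦ x ▷̄ y and x ↦ x ▷ y are bijections of ZMod 3 and the map (x, y) ↦ (y ▷̄ x, x ▷ y) is a bijection of (ZMod 3) × (ZMod 3); (3) for all x, y, z the exchange laws (x ▷ y) ▷ (z ▷ y) = (x ▷ z) ▷ (y ▷̄ z), (x ▷ y) ▷̄ (z ▷ y) = (x ▷̄ z) ▷ (y ▷̄ z), and (x ▷̄ y) ▷̄ (z ▷̄ y) = (x ▷̄ z) ▷̄ (y ▷ z) hold. -/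
import Mathlib

/-- The underoperation `x ▷ y`. -/
def biqOp (x y : ZMod 3) : ZMod 3 := 2 * x + 2 * y + 2

/-- The overoperation `x ▷̄ y`. -/
def biqOpBar (x y : ZMod 3) : ZMod 3 := x + 2

/-- These operations satisfy all the biquandle axioms. -/
theorem zmod3_table_biquandle :
    (∀ x, biqOp x x = biqOpBar x x) ∧
    (∀ y, Function.Bijective (fun x => biqOpBar x y)) ∧
    (∀ y, Function.Bijective (fun x => biqOp x y)) ∧
    Function.Bijective
      (fun p : ZMod 3 × ZMod 3 => (biqOpBar p.2 p.1, biqOp p.1 p.2)) ∧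
    (∀ x y z, biqOp (biqOp x y) (biqOp z y) = biqOp (biqOp x z) (biqOpBar y z)) ∧
    (∀ x y z, biqOpBar (biqOp x y) (biqOp z y) = biqOp (biqOpBar x z) (biqOpBar y z)) ∧
    (∀ x y z, biqOpBar (biqOpBar x y) (biqOpBar z y) = biqOpBar (biqOpBar x z) (biqOp y z)) := by
  refine ⟨by decide, by decide, by decide, by decide, by decide, by decide, by decide⟩
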